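/- For two independent predictors with symmetric noise rates R1, R2 ∈ [0,1) on a c-class problem (c ≥ 2), the conditional probability that the common label is wrong given that the two predictions agree equals (R1·R2/(c-1)) / ((1-R1)(1-R2) + R1·R2/(c-1)). -/

import Mathlib

/-- For two independent predictors with symmetric noise rates `R1, R2 ∈ [0,1)`
on a `c`-class problem (`c ≥ 2`), the conditional probability that the common
label is wrong given that the two predictions agree equals
`(R1*R2/(c-1)) / ((1-R1)*(1-R2) + R1*R2/(c-1))`. -/
theorem lcc_conditional_noise_rate
    (c : ℕ) (hc : 2 ≤ c) (R1 R2 : ℝ)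
    (hR1 : 0 ≤ R1) (hR1' : R1 < 1) (hR2 : 0 ≤ R2) (hR2' : R2 < 1)
    (y : Fin c)
    (p1 p2 : Fin c → ℝ)
    (hp1 : ∀ z, p1 z = if z = y then 1 - R1 else R1 / ((c : ℝ) - 1))
    (hp2 : ∀ z, p2 z = if z = y then 1 - R2 else R2 / ((c : ℝ) - 1)) :
    (∑ z ∈ Finset.univ.filter (fun z => z ≠ y), p1 z * p2 z)
        / (∑ z, p1 z * p2 z)
      = (R1 * R2 / ((c : ℝ) - 1))
          / ((1 - R1) * (1 - R2) + R1 * R2 / ((c : ℝ) - 1)) := by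
  have hcr : (1:ℝ) ≤ (c:ℝ) - 1 := by
    have : (2:ℝ) ≤ (c:ℝ) := by exact_mod_cast hc
    linarith
  have hne : ((c:ℝ) - 1) ≠ 0 := by linarith
  have hfilter : Finset.univ.filter (fun z : Fin c => z ≠ y) = Finset.univ.erase y := by
    ext z; simp [Finset.mem_erase, and_comm]
  have hcard : ((Finset.univ.erase y).card : ℝ) = (c:ℝ) - 1 := by
    rw [Finset.card_erase_of_mem (Finset.mem_univ y)]
    simp
    have : 1 ≤ c := by omega
    push_cast [this]
    ring
  have hS : (∑ z ∈ Finset.univ.filter (fun z => z ≠ y), p1 z * p2 z)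
      = R1 * R2 / ((c : ℝ) - 1) := by
    rw [hfilter]
    rw [Finset.sum_congr rfl (fun z hz => by
      rw [hp1, hp2, if_neg (Finset.ne_of_mem_erase hz), if_neg (Finset.ne_of_mem_erase hz)])]
    rw [Finset.sum_const, nsmul_eq_mul, hcard]
    field_simp
  have hT : (∑ z, p1 z * p2 z)
      = (1 - R1) * (1 - R2) + R1 * R2 / ((c : ℝ) - 1) := by
    rw [← Finset.add_sum_erase Finset.univ _ (Finset.mem_univ y)]
    rw [hp1, hp2, if_pos rfl, if_pos rfl]
    rw [← hfilter, hS]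
  rw [hS, hT]
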